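/- In the Artin group A(6,3,2) = ⟨s, t, r | ststst = tststs, trt = rtr, sr = rs⟩, for every k ≥ 1 and all nonzero integers n_1, …, n_k, the element tststr commutes with the element (s^{n_1} t s t r t^{-1})(s^{n_2} t s t r t^{-1}) ⋯ (s^{n_k} t s t r t^{-1}). In particular, for each such product w, the subgroup ⟨tststr, w⟩ of A(6,3,2) is abelian. -/

import Mathlib

namespace A632

/-- The defining relations of the Artin group
`A(6,3,2) = ⟨s, t, r | ststst = tststs, trt = rtr, sr = rs⟩`,
with `0, 1, 2` playing the roles of `s, t, r`. -/
def rels : Set (FreeGroup (Fin 3)) :=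
  { FreeGroup.of 0 * FreeGroup.of 1 * FreeGroup.of 0 * FreeGroup.of 1 *
      FreeGroup.of 0 * FreeGroup.of 1 *
      (FreeGroup.of 1 * FreeGroup.of 0 * FreeGroup.of 1 * FreeGroup.of 0 *
        FreeGroup.of 1 * FreeGroup.of 0)⁻¹,
    FreeGroup.of 1 * FreeGroup.of 2 * FreeGroup.of 1 *
      (FreeGroup.of 2 * FreeGroup.of 1 * FreeGroup.of 2)⁻¹,
    FreeGroup.of 0 * FreeGroup.of 2 * (FreeGroup.of 2 * FreeGroup.of 0)⁻¹ }

/-- The Artin group `A(6,3,2)`. -/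
abbrev Grp := PresentedGroup rels

def s : Grp := PresentedGroup.of 0
def t : Grp := PresentedGroup.of 1
def r : Grp := PresentedGroup.of 2

end A632


open A632 in
private lemma A632_mk_rel_one {w : FreeGroup (Fin 3)} (hw : w ∈ rels) :
    PresentedGroup.mk rels w = 1 :=
  (QuotientGroup.eq_one_iff _).mpr (Subgroup.subset_normalClosure hw)

open A632 in
private lemma A632_rel1 : s * t * s * t * s * t = t * s * t * s * t * s := by
  have h := A632_mk_rel_one (Set.mem_insert _ _)
  rw [map_mul, map_inv, mul_inv_eq_one] at h
  simpa [s, t, r, PresentedGroup.of, map_mul] using h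

open A632 in
private lemma A632_rel2 : t * r * t = r * t * r := by
  have h := A632_mk_rel_one (Set.mem_insert_of_mem _ (Set.mem_insert _ _))
  rw [map_mul, map_inv, mul_inv_eq_one] at h
  simpa [s, t, r, PresentedGroup.of, map_mul] using h

open A632 in
private lemma A632_rel3 : s * r = r * s := by
  have h := A632_mk_rel_one (Set.mem_insert_of_mem _ (Set.mem_insert_of_mem _ rfl))
  rw [map_mul, map_inv, mul_inv_eq_one] at h
  simpa [s, t, r, PresentedGroup.of, map_mul] using h

open A632 in
private lemma A632_rel2a : t * r * t⁻¹ = r⁻¹ * t * r := by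
  calc t*r*t⁻¹ = r⁻¹*((r*t*r)*t⁻¹) := by group
    _ = r⁻¹*((t*r*t)*t⁻¹) := by rw [← A632_rel2]
    _ = r⁻¹*t*r := by group

open A632 in
private lemma A632_rel2b : r * t * r⁻¹ = t⁻¹ * r * t := by
  calc r*t*r⁻¹ = t⁻¹*((t*r*t)*r⁻¹) := by group
    _ = t⁻¹*((r*t*r)*r⁻¹) := by rw [A632_rel2]
    _ = t⁻¹*r*t := by group

open A632 in
private lemma A632_rel3a : s * r⁻¹ = r⁻¹ * s :=
  (show Commute s r from A632_rel3).inv_right.eq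

open A632 in
private lemma A632_comm_zs : Commute (t * s * t * s * t * r) s := by
  show _ = _
  calc (t * s * t * s * t * r) * s
      = (t*s*t*s*t)*(r*s) := by group
    _ = (t*s*t*s*t)*(s*r) := by rw [← A632_rel3]
    _ = (t*s*t*s*t*s)*r := by group
    _ = (s*t*s*t*s*t)*r := by rw [← A632_rel1]
    _ = s * (t*s*t*s*t*r) := by group

open A632 in
private lemma A632_comm_zx : Commute (t * s * t * s * t * r) (t * s * t * r * t⁻¹) := by
  show _ = _
  calc (t*s*t*s*t*r) * (t*s*t*r*t⁻¹)
      = t*s*t*s*t*r*(t*s)*(t*r*t⁻¹) := by group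
    _ = t*s*t*s*t*r*(t*s)*(r⁻¹*t*r) := by rw [A632_rel2a]
    _ = t*s*t*s*t*r*t*(s*r⁻¹)*(t*r) := by group
    _ = t*s*t*s*t*r*t*(r⁻¹*s)*(t*r) := by rw [A632_rel3a]
    _ = t*s*t*s*t*(r*t*r⁻¹)*(s*t*r) := by group
    _ = t*s*t*s*t*(t⁻¹*r*t)*(s*t*r) := by rw [A632_rel2b]
    _ = t*s*t*(s*r)*(t*s*t*r) := by group
    _ = t*s*t*(r*s)*(t*s*t*r) := by rw [A632_rel3]
    _ = (t*s*t*r*t⁻¹) * (t*s*t*s*t*r) := by group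

open A632 in
private lemma A632_comm_factor (m : ℤ) :
    Commute (t * s * t * s * t * r) (s ^ m * t * s * t * r * t⁻¹) := by
  have h : s ^ m * t * s * t * r * t⁻¹ = s ^ m * (t * s * t * r * t⁻¹) := by group
  rw [h]
  exact ((A632_comm_zs.zpow_right m).mul_right A632_comm_zx)

open A632 in
/-- In `A(6,3,2)`, the element `tststr` commutes with every product
`(s^{n₁}tstrt⁻¹)⋯(s^{n_k}tstrt⁻¹)` with all `nᵢ` nonzero; in particular the subgroup
generated by `tststr` and such a product is abelian. -/
theorem A632_tststr_commutes (k : ℕ) (hk : 1 ≤ k) (n : Fin k → ℤ) (hn : ∀ p, n p ≠ 0) :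
    Commute (t * s * t * s * t * r)
      (((List.finRange k).map fun p => s ^ n p * t * s * t * r * t⁻¹).prod) ∧
    IsMulCommutative (Subgroup.closure {t * s * t * s * t * r,
      ((List.finRange k).map fun p => s ^ n p * t * s * t * r * t⁻¹).prod}) := by
  set z := t * s * t * s * t * r with hz
  set w := ((List.finRange k).map fun p => s ^ n p * t * s * t * r * t⁻¹).prod with hw
  have hcw : Commute z w := by
    refine Commute.list_prod_right _ _ ?_
    intro x hx
    simp only [List.mem_map] at hx
    obtain ⟨p, -, rfl⟩ := hx
    exact A632_comm_factor (n p)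
  refine ⟨hcw, ?_⟩
  have hpair : ∀ a ∈ ({z, w} : Set A632.Grp), ∀ b ∈ ({z, w} : Set A632.Grp), Commute a b := by
    rintro a (rfl | rfl) b (rfl | rfl)
    · exact Commute.refl _
    · exact hcw
    · exact hcw.symm
    · exact Commute.refl _
  constructor
  constructor
  rintro ⟨a, ha⟩ ⟨b, hb⟩
  refine Subtype.ext ?_
  show a * b = b * a
  refine Subgroup.closure_induction₂
    (p := fun x y _ _ => Commute x y)
    (fun x y hx hy => hpair x hx y hy)
    (fun x _ => Commute.one_left x) (fun x _ => Commute.one_right x)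
    (fun x y zz _ _ _ h1 h2 => h1.mul_left h2)
    (fun y zz x _ _ _ h1 h2 => h1.mul_right h2)
    (fun x y _ _ h => h.inv_left) (fun x y _ _ h => h.inv_right) ha hb
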